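/- arXiv:1805.08196 — 4 statements merged into one kernel-verified Lean document; each statement's English description precedes it below -/
import Mathlib

section
/- (Gumbel-max identity) Let Y be a finite nonempty set, let s : Y → ℝ be a score function, let β > 0, and let (γ_y)_{y∈Y} be independent real random variables each distributed according to the Gumbel distribution with location 0 and scale β, i.e. with cumulative distribution function F(t) = exp(−exp(−t/β)). Then for every y₀ ∈ Y, the probability that s(y₀) + γ_{y₀} > s(y) + γ_y for all y ≠ y₀ (i.e. that y₀ is the unique maximizer of the perturbed scores) equals exp(s(y₀)/β) / ∑_{y∈Y} exp(s(y)/β). -/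
open MeasureTheory ProbabilityTheory Real

private lemma gumbel_strictMono {β : ℝ} (hβ : 0 < β) :
    StrictMono fun t : ℝ => exp (-exp (-t / β)) := by
  intro x y hxy
  have h1 : -y / β < -x / β := by
    rw [div_lt_div_iff_of_pos_right hβ]
    linarith
  exact exp_lt_exp.2 (neg_lt_neg (exp_lt_exp.2 h1))

private lemma gumbel_Iio {β : ℝ} (hβ : 0 < β) (ν : Measure ℝ)
    (h : ∀ t, ν (Set.Iic t) = ENNReal.ofReal (exp (-exp (-t / β)))) (t : ℝ) :
    ν (Set.Iio t) = ENNReal.ofReal (exp (-exp (-t / β))) := by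
  have hunion : Set.Iio t = ⋃ n : ℕ, Set.Iic (t - 1 / (n + 1)) := by
    ext x
    simp only [Set.mem_Iio, Set.mem_iUnion, Set.mem_Iic]
    constructor
    · intro hx
      obtain ⟨n, hn⟩ := exists_nat_gt (1 / (t - x))
      refine ⟨n, ?_⟩
      have hpos : 0 < t - x := by linarith
      have h1 : 1 / (t - x) < (n : ℝ) + 1 := by linarith
      have h2 : 1 / ((n : ℝ) + 1) < t - x := by
        rw [div_lt_iff₀ (by positivity)]
        rw [div_lt_iff₀ hpos] at h1
        linarith
      linarith
    · rintro ⟨n, hn⟩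
      have : (0 : ℝ) < 1 / ((n : ℝ) + 1) := by positivity
      linarith
  have hmono : Monotone fun n : ℕ => Set.Iic (t - 1 / ((n : ℝ) + 1)) := by
    intro m n hmn
    apply Set.Iic_subset_Iic.2
    have : 1 / ((n : ℝ) + 1) ≤ 1 / ((m : ℝ) + 1) := by
      apply one_div_le_one_div_of_le (by positivity)
      exact_mod_cast by omega
    linarith
  have h1 := tendsto_measure_iUnion_atTop (μ := ν) hmono
  rw [← hunion] at h1
  have h2 : Filter.Tendsto (fun n : ℕ => ν (Set.Iic (t - 1 / ((n : ℝ) + 1)))) Filter.atTop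
      (nhds (ENNReal.ofReal (exp (-exp (-t / β))))) := by
    simp only [h]
    apply (ENNReal.continuous_ofReal.tendsto _).comp
    have hc : Continuous fun u : ℝ => exp (-exp (-u / β)) := by fun_prop
    apply (hc.tendsto t).comp
    have : Filter.Tendsto (fun n : ℕ => t - 1 / ((n : ℝ) + 1)) Filter.atTop (nhds (t - 0)) :=
      Filter.Tendsto.sub tendsto_const_nhds tendsto_one_div_add_atTop_nhds_zero_nat
    simpa using this
  exact tendsto_nhds_unique h1 h2

private lemma gumbel_map_cdf {β : ℝ} (hβ : 0 < β) (ν : Measure ℝ) [IsProbabilityMeasure ν]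
    (h : ∀ t, ν (Set.Iic t) = ENNReal.ofReal (exp (-exp (-t / β)))) :
    ν.map (fun t => exp (-exp (-t / β))) = volume.restrict (Set.Ioc 0 1) := by
  have hFmeas : Measurable fun t : ℝ => exp (-exp (-t / β)) := by fun_prop
  haveI : IsProbabilityMeasure (ν.map (fun t => exp (-exp (-t / β)))) :=
    Measure.isProbabilityMeasure_map hFmeas.aemeasurable
  refine Measure.ext_of_Iic _ _ (fun u => ?_)
  rw [Measure.map_apply hFmeas measurableSet_Iic, Measure.restrict_apply measurableSet_Iic]
  rcases le_or_gt u 0 with hu | hu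
  · have h1 : (fun t : ℝ => exp (-exp (-t / β))) ⁻¹' Set.Iic u = ∅ := by
      ext t
      simp only [Set.mem_preimage, Set.mem_Iic, Set.mem_empty_iff_false, iff_false, not_le]
      exact lt_of_le_of_lt hu (exp_pos _)
    have h2 : Set.Iic u ∩ Set.Ioc 0 1 = ∅ := by
      ext v
      simp only [Set.mem_inter_iff, Set.mem_Iic, Set.mem_Ioc, Set.mem_empty_iff_false, iff_false,
        not_and, and_imp]
      intro h1' h2'
      linarith
    rw [h1, h2]
    simp
  · rcases lt_or_ge u 1 with hu1 | hu1
    · set tu : ℝ := -(β * Real.log (-Real.log u)) with htu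
      have hlogu : Real.log u < 0 := Real.log_neg hu hu1
      have hFtu : exp (-exp (-tu / β)) = u := by
        have h1 : -tu / β = Real.log (-Real.log u) := by
          rw [htu]; field_simp
        rw [h1, Real.exp_log (by linarith), neg_neg, Real.exp_log hu]
      have hset : (fun t : ℝ => exp (-exp (-t / β))) ⁻¹' Set.Iic u = Set.Iic tu := by
        ext t
        simp only [Set.mem_preimage, Set.mem_Iic]
        rw [← hFtu]
        exact (gumbel_strictMono hβ).le_iff_le
      rw [hset, h tu, hFtu]
      have h2 : Set.Iic u ∩ Set.Ioc 0 1 = Set.Ioc 0 u := by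
        ext v
        simp only [Set.mem_inter_iff, Set.mem_Iic, Set.mem_Ioc]
        constructor
        · rintro ⟨h1', h2', h3'⟩; exact ⟨h2', h1'⟩
        · rintro ⟨h1', h2'⟩; exact ⟨h2', h1', by linarith⟩
      rw [h2, Real.volume_Ioc, sub_zero]
    · have h1 : (fun t : ℝ => exp (-exp (-t / β))) ⁻¹' Set.Iic u = Set.univ := by
        ext t
        simp only [Set.mem_preimage, Set.mem_Iic, Set.mem_univ, iff_true]
        have : exp (-exp (-t / β)) ≤ 1 := exp_le_one_iff.2 (neg_nonpos.2 (exp_pos _).le)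
        linarith
      have h2 : Set.Iic u ∩ Set.Ioc 0 1 = Set.Ioc 0 1 := by
        ext v
        simp only [Set.mem_inter_iff, Set.mem_Iic, Set.mem_Ioc]
        constructor
        · rintro ⟨_, h'⟩; exact h'
        · rintro ⟨h1', h2'⟩; exact ⟨by linarith, h1', h2'⟩
      rw [h1, h2, measure_univ, Real.volume_Ioc]
      norm_num

private lemma gumbel_rpow_integral {a : ℝ} (ha : 0 ≤ a) :
    ∫⁻ v in Set.Ioc (0:ℝ) 1, ENNReal.ofReal (v ^ a) = ENNReal.ofReal (1 / (a + 1)) := by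
  have hInt : IntegrableOn (fun v : ℝ => v ^ a) (Set.Ioc 0 1) volume := by
    have := intervalIntegral.intervalIntegrable_rpow' (a := (0:ℝ)) (b := 1) (r := a) (by linarith)
    rwa [intervalIntegrable_iff_integrableOn_Ioc_of_le (by norm_num)] at this
  rw [← ofReal_integral_eq_lintegral_ofReal hInt]
  · congr 1
    rw [← intervalIntegral.integral_of_le (by norm_num : (0:ℝ) ≤ 1)]
    rw [integral_rpow (Or.inl (by linarith))]
    rw [Real.one_rpow, Real.zero_rpow (by linarith), sub_zero]
  · filter_upwards [ae_restrict_mem measurableSet_Ioc] with v hv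
    have : (0:ℝ) < v := hv.1
    positivity

/-- **Gumbel-max identity.** If each score `s y` is perturbed by independent
Gumbel(0, β) noise `γ y`, then the probability that `y₀` is the unique maximizer
of the perturbed scores equals the softmax probability of `y₀`. -/
theorem gumbel_max_identity
    {Y : Type*} [Fintype Y] [Nonempty Y]
    (s : Y → ℝ) (β : ℝ) (hβ : 0 < β)
    {Ω : Type*} [MeasurableSpace Ω] (μ : Measure Ω) [IsProbabilityMeasure μ]
    (γ : Y → Ω → ℝ)
    (hmeas : ∀ y, Measurable (γ y))
    (hindep : iIndepFun γ μ)
    (hcdf : ∀ y t, μ {ω | γ y ω ≤ t} = ENNReal.ofReal (exp (-exp (-t / β))))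
    (y₀ : Y) :
    (μ {ω | ∀ y : Y, y ≠ y₀ → s y + γ y ω < s y₀ + γ y₀ ω}).toReal
      = exp (s y₀ / β) / ∑ y : Y, exp (s y / β) := by
  classical
  set F : ℝ → ℝ := fun t => exp (-exp (-t / β)) with hF
  set ν : Y → Measure ℝ := fun y => μ.map (γ y) with hν
  haveI hprob : ∀ y, IsProbabilityMeasure (ν y) := fun y =>
    Measure.isProbabilityMeasure_map (hmeas y).aemeasurable
  have hIic : ∀ y t, ν y (Set.Iic t) = ENNReal.ofReal (F t) := by
    intro y t
    rw [hν]
    rw [Measure.map_apply (hmeas y) measurableSet_Iic]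
    exact hcdf y t
  have hIio : ∀ y t, ν y (Set.Iio t) = ENNReal.ofReal (F t) :=
    fun y => gumbel_Iio hβ (ν y) (hIic y)
  -- joint law is the product measure
  have hΦmeas : Measurable fun ω => fun y => γ y ω :=
    measurable_pi_lambda _ fun y => hmeas y
  have hjoint : μ.map (fun ω => fun y => γ y ω) = Measure.pi ν := by
    refine (Measure.pi_eq fun sets hsets => ?_).symm
    rw [Measure.map_apply hΦmeas (MeasurableSet.univ_pi hsets)]
    have hpre : (fun ω => fun y => γ y ω) ⁻¹' Set.univ.pi sets
        = ⋂ y ∈ Finset.univ, γ y ⁻¹' sets y := by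
      ext ω
      simp [Set.mem_pi]
    rw [hpre, hindep.measure_inter_preimage_eq_mul Finset.univ (fun i _ => hsets i)]
    refine Finset.prod_congr rfl fun y _ => ?_
    rw [hν, Measure.map_apply (hmeas y) (hsets y)]
  -- the event as a preimage
  set c : Y → ℝ := fun y => s y₀ - s y with hc
  set S : Set (Y → ℝ) := {x | ∀ y, y ≠ y₀ → x y < c y + x y₀} with hS
  have hSmeas : MeasurableSet S := by
    rw [hS, Set.setOf_forall]
    refine MeasurableSet.iInter fun y => ?_
    by_cases hy : y = y₀
    · simp [hy]
    · have : {x : Y → ℝ | y ≠ y₀ → x y < c y + x y₀} = {x : Y → ℝ | x y < c y + x y₀} := by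
        ext x; simp [hy]
      rw [this]
      exact measurableSet_lt (measurable_pi_apply y)
        (measurable_const.add (measurable_pi_apply y₀))
  have hevent : {ω | ∀ y : Y, y ≠ y₀ → s y + γ y ω < s y₀ + γ y₀ ω}
      = (fun ω => fun y => γ y ω) ⁻¹' S := by
    ext ω
    simp only [Set.mem_setOf_eq, Set.mem_preimage, hS, hc]
    constructor
    · intro h y hy
      have := h y hy
      linarith
    · intro h y hy
      have := h y hy
      linarith
  rw [hevent, ← Measure.map_apply hΦmeas hSmeas, hjoint]
  -- split off coordinate y₀
  set p : Y → Prop := fun y => y = y₀ with hp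
  have hpy : ∀ y, p y ↔ y = y₀ := fun y => by rw [hp]
  set j : {y // p y} := ⟨y₀, (hpy y₀).2 rfl⟩ with hj
  have hjval : (j : Y) = y₀ := rfl
  clear_value p
  clear hp
  haveI hprob1 : ∀ i : {y // p y}, IsProbabilityMeasure (ν ↑i) := fun i => hprob ↑i
  haveI hprob2 : ∀ i : {y // ¬ p y}, IsProbabilityMeasure (ν ↑i) := fun i => hprob ↑i
  have mp1 := measurePreserving_piEquivPiSubtypeProd (fun y : Y => ν y) p
  set T : Set (({y // p y} → ℝ) × ({y // ¬ p y} → ℝ)) :=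
    {q | ∀ i : {y // ¬ p y}, q.2 i < c ↑i + q.1 j} with hT
  have hTmeas : MeasurableSet T := by
    rw [hT, Set.setOf_forall]
    refine MeasurableSet.iInter fun i => ?_
    apply measurableSet_lt
    · exact (measurable_pi_apply i).comp measurable_snd
    · exact measurable_const.add ((measurable_pi_apply j).comp measurable_fst)
  have hpre : (MeasurableEquiv.piEquivPiSubtypeProd (fun _ : Y => ℝ) p) ⁻¹' T = S := by
    ext x
    simp only [Set.mem_preimage, hT, hS, Set.mem_setOf_eq,
      MeasurableEquiv.piEquivPiSubtypeProd_apply, hjval]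
    constructor
    · intro h y hy
      exact h ⟨y, fun hpy' => hy ((hpy y).1 hpy')⟩
    · intro h i
      exact h ↑i fun he => i.2 ((hpy ↑i).2 he)
  have hstep1 : Measure.pi ν S
      = ((Measure.pi fun i : {y // p y} => ν ↑i).prod
          (Measure.pi fun i : {y // ¬ p y} => ν ↑i)) T := by
    rw [← mp1.map_eq, Measure.map_apply mp1.measurable hTmeas, hpre]
  rw [hstep1]
  -- Fubini
  set a : ℝ := ∑ i : {y // ¬ p y}, exp (-(c ↑i) / β) with ha
  have ha0 : 0 ≤ a := Finset.sum_nonneg fun i _ => (exp_pos _).le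
  have hslice : ∀ t : ℝ,
      (Measure.pi fun i : {y // ¬ p y} => ν ↑i) {r | ∀ i : {y // ¬ p y}, r i < c ↑i + t}
        = ENNReal.ofReal ((F t) ^ a) := by
    intro t
    have h1 : {r : {y // ¬ p y} → ℝ | ∀ i, r i < c ↑i + t}
        = Set.univ.pi fun i : {y // ¬ p y} => Set.Iio (c ↑i + t) := by
      ext r; simp [Set.mem_pi]
    rw [h1, Measure.pi_pi]
    have h2 : ∀ i : {y // ¬ p y}, ν ↑i (Set.Iio (c ↑i + t)) = ENNReal.ofReal (F (c ↑i + t)) :=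
      fun i => hIio ↑i _
    simp only [h2]
    rw [← ENNReal.ofReal_prod_of_nonneg (fun i _ => (exp_pos _).le)]
    congr 1
    have hFc : ∀ u : ℝ, F u = exp (-exp (-u / β)) := fun u => rfl
    calc (∏ i : {y // ¬ p y}, F (c ↑i + t))
        = ∏ i : {y // ¬ p y}, exp (-exp (-(c ↑i + t) / β)) := by
          refine Finset.prod_congr rfl fun i _ => hFc _
      _ = exp (∑ i : {y // ¬ p y}, -exp (-(c ↑i + t) / β)) := (Real.exp_sum _ _).symm
      _ = exp (a * -exp (-t / β)) := by
          congr 1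
          rw [ha, Finset.sum_mul]
          refine Finset.sum_congr rfl fun i _ => ?_
          have h3 : -(c ↑i + t) / β = -(c ↑i) / β + -t / β := by ring
          rw [h3, Real.exp_add]
          ring
      _ = F t ^ a := by
          rw [hFc, Real.rpow_def_of_pos (exp_pos _), Real.log_exp, mul_comm]
  rw [Measure.prod_apply hTmeas]
  have hint1 : ∫⁻ x₁ : {y // p y} → ℝ,
        (Measure.pi fun i : {y // ¬ p y} => ν ↑i) (Prod.mk x₁ ⁻¹' T)
        ∂(Measure.pi fun i : {y // p y} => ν ↑i)
      = ∫⁻ x₁ : {y // p y} → ℝ, ENNReal.ofReal (F (x₁ j) ^ a)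
        ∂(Measure.pi fun i : {y // p y} => ν ↑i) := by
    refine lintegral_congr fun x₁ => ?_
    have h0 : Prod.mk x₁ ⁻¹' T = {r : {y // ¬ p y} → ℝ | ∀ i, r i < c ↑i + x₁ j} := rfl
    rw [h0, hslice]
  rw [hint1]
  -- the marginal of the coordinate y₀
  have hmF : Measurable F := by
    rw [hF]; fun_prop
  have hmargin : (Measure.pi fun i : {y // p y} => ν ↑i).map (fun x₁ => x₁ j) = ν y₀ := by
    haveI : IsProbabilityMeasure (Measure.pi fun i : {y // p y} => ν ↑i) := by
      infer_instance
    haveI : IsProbabilityMeasure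
        ((Measure.pi fun i : {y // p y} => ν ↑i).map (fun x₁ => x₁ j)) :=
      Measure.isProbabilityMeasure_map (measurable_pi_apply j).aemeasurable
    refine Measure.ext_of_Iic _ _ fun u => ?_
    rw [Measure.map_apply (measurable_pi_apply j) measurableSet_Iic]
    have hij : ∀ i : {y // p y}, i = j := fun i =>
      Subtype.ext (((hpy ↑i).1 i.2).trans hjval.symm)
    have h1 : (fun x₁ : {y // p y} → ℝ => x₁ j) ⁻¹' Set.Iic u
        = Set.univ.pi fun _ : {y // p y} => Set.Iic u := by
      ext x₁
      simp only [Set.mem_preimage, Set.mem_Iic, Set.mem_pi, Set.mem_univ, forall_true_left]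
      constructor
      · intro h i
        rw [hij i]
        exact h
      · intro h
        exact h j
    rw [h1, Measure.pi_pi]
    have h2 : ∀ i : {y // p y}, ν ↑i (Set.Iic u) = ν y₀ (Set.Iic u) := fun i => by
      rw [(hpy ↑i).1 i.2]
    rw [Finset.prod_congr rfl fun i _ => h2 i, Finset.prod_const]
    have h3 : Fintype.card {y // p y} = 1 :=
      Fintype.card_eq_one_iff.2 ⟨j, fun i => hij i⟩
    rw [Finset.card_univ, h3, pow_one]
  have hra : Measurable fun v : ℝ => ENNReal.ofReal (v ^ a) :=
    ENNReal.measurable_ofReal.comp (Measurable.pow_const measurable_id a)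
  have hint2 : ∫⁻ x₁ : {y // p y} → ℝ, ENNReal.ofReal (F (x₁ j) ^ a)
        ∂(Measure.pi fun i : {y // p y} => ν ↑i)
      = ∫⁻ u, ENNReal.ofReal (F u ^ a) ∂(ν y₀) := by
    have hfa : Measurable fun u : ℝ => ENNReal.ofReal (F u ^ a) :=
      ENNReal.measurable_ofReal.comp (hmF.pow_const a)
    rw [← hmargin, lintegral_map hfa (measurable_pi_apply j)]
  rw [hint2]
  have hint3 : ∫⁻ u, ENNReal.ofReal (F u ^ a) ∂(ν y₀)
      = ∫⁻ v, ENNReal.ofReal (v ^ a) ∂((ν y₀).map F) := by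
    rw [lintegral_map hra hmF]
  rw [hint3]
  have hmapF : (ν y₀).map F = volume.restrict (Set.Ioc 0 1) := by
    rw [hF]
    exact gumbel_map_cdf hβ (ν y₀) (hIic y₀)
  rw [hmapF, gumbel_rpow_integral ha0, ENNReal.toReal_ofReal (by positivity)]
  -- final algebra
  have hsum : a + 1 = (∑ y : Y, exp (s y / β)) / exp (s y₀ / β) := by
    have h1 : a = ∑ x ∈ Finset.univ.erase y₀, exp (-(c x) / β) := by
      rw [ha]
      rw [← Finset.sum_subtype (Finset.univ.erase y₀)
        (fun x => by simp [Finset.mem_erase, hpy x]) (fun x => exp (-(c x) / β))]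
    have h2 : (∑ x ∈ Finset.univ.erase y₀, exp (-(c x) / β)) + exp (-(c y₀) / β)
        = ∑ y : Y, exp (-(c y) / β) :=
      Finset.sum_erase_add _ _ (Finset.mem_univ y₀)
    have h3 : exp (-(c y₀) / β) = 1 := by
      rw [hc]; simp
    have h4 : ∀ y : Y, exp (-(c y) / β) = exp (s y / β) / exp (s y₀ / β) := by
      intro y
      rw [hc]
      simp only [neg_sub]
      rw [sub_div, Real.exp_sub]
    rw [h1, ← h3, h2]
    rw [Finset.sum_congr rfl fun y _ => h4 y, ← Finset.sum_div]
  rw [hsum, one_div_div]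
end

section
/- (Lemma 2: randomized loss lower bounds the CRF loss) For each i = 1,…,m let Y_i be a finite nonempty set, s_i : Y_i → ℝ a score function, β > 0, y_i ∈ Y_i an observed output, T_i ⊆ Y_i any subset, and T̃_i = T_i ∪ {y_i}. Write q_{i,A}(y) for the restricted softmax distribution on a nonempty subset A ⊆ Y_i. Then (1/m)∑_{i=1}^m (1 − q_{i,T̃_i}(y_i)) − (1/m)∑_{i=1}^m (1 − q_{i,Y_i}(y_i)) = −(1/m)∑_{i=1}^m q_{i,T̃_i}(y_i) · (∑_{y ∈ Y_i∖T̃_i} q_{i,Y_i}(y)) ≤ 0; that is, the randomized augmented loss L(w,S,T̃) is at most the full CRF loss L(w,S). -/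
open Real Finset

/-- The restricted softmax distribution on a subset `A` of outputs:
`q_A(y) = 1[y ∈ A] · exp(s(y)/β) / ∑_{y'∈A} exp(s(y')/β)`. -/
noncomputable def softmaxOn {Y : Type*} [DecidableEq Y]
    (s : Y → ℝ) (β : ℝ) (A : Finset Y) (y : Y) : ℝ :=
  (if y ∈ A then exp (s y / β) else 0) / ∑ y' ∈ A, exp (s y' / β)

lemma softmax_aux (a ST SD S : ℝ) (hST : ST ≠ 0) (hS : S ≠ 0) (h : S = ST + SD) :
    a / ST - a / S = a / ST * (SD / S) := by
  subst h; field_simp; ring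

/-- **Lemma 2: the randomized augmented loss lower bounds the CRF loss.**
For each example `i` with output set `Y i`, score `s i`, observed output `yobs i`
and augmented subset `T̃ i = T i ∪ {yobs i}`, the difference between the
randomized augmented loss and the full CRF loss equals
`−(1/m)∑ᵢ q_{i,T̃ᵢ}(yᵢ) · ∑_{y ∈ Yᵢ∖T̃ᵢ} q_{i,Yᵢ}(y)`, which is `≤ 0`. -/
theorem randomized_loss_lower_bounds_crf_loss
    (m : ℕ) (hm : 0 < m)
    (Y : Fin m → Type*) [∀ i, Fintype (Y i)] [∀ i, DecidableEq (Y i)]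
    [∀ i, Nonempty (Y i)]
    (s : ∀ i, Y i → ℝ) (β : ℝ) (hβ : 0 < β)
    (yobs : ∀ i, Y i) (T : ∀ i, Finset (Y i)) :
    ((1 / (m : ℝ)) * ∑ i, (1 - softmaxOn (s i) β (insert (yobs i) (T i)) (yobs i)))
        - (1 / (m : ℝ)) * ∑ i, (1 - softmaxOn (s i) β Finset.univ (yobs i))
      = -((1 / (m : ℝ)) * ∑ i,
            softmaxOn (s i) β (insert (yobs i) (T i)) (yobs i)
              * ∑ y ∈ Finset.univ \ insert (yobs i) (T i), softmaxOn (s i) β Finset.univ y)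
    ∧ ((1 / (m : ℝ)) * ∑ i, (1 - softmaxOn (s i) β (insert (yobs i) (T i)) (yobs i)))
        - (1 / (m : ℝ)) * ∑ i, (1 - softmaxOn (s i) β Finset.univ (yobs i)) ≤ 0 := by
  have key : ∀ i, softmaxOn (s i) β (insert (yobs i) (T i)) (yobs i)
      - softmaxOn (s i) β Finset.univ (yobs i)
      = softmaxOn (s i) β (insert (yobs i) (T i)) (yobs i)
          * ∑ y ∈ Finset.univ \ insert (yobs i) (T i), softmaxOn (s i) β Finset.univ y := by
    intro i
    set A := insert (yobs i) (T i) with hA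
    have hST : (0 : ℝ) < ∑ y' ∈ A, exp (s i y' / β) :=
      Finset.sum_pos (fun y _ => exp_pos _) ⟨yobs i, mem_insert_self _ _⟩
    have hS : (0 : ℝ) < ∑ y' : Y i, exp (s i y' / β) :=
      Finset.sum_pos (fun y _ => exp_pos _) Finset.univ_nonempty
    have hsplit : (∑ y' : Y i, exp (s i y' / β))
        = (∑ y' ∈ A, exp (s i y' / β)) + ∑ y ∈ Finset.univ \ A, exp (s i y / β) := by
      rw [← Finset.sum_sdiff (Finset.subset_univ A)]; ring
    have hsum : ∑ y ∈ Finset.univ \ A, softmaxOn (s i) β Finset.univ y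
        = (∑ y ∈ Finset.univ \ A, exp (s i y / β)) / ∑ y' : Y i, exp (s i y' / β) := by
      rw [Finset.sum_div]
      exact Finset.sum_congr rfl fun y _ => by simp [softmaxOn]
    simp only [softmaxOn, if_pos (mem_insert_self (yobs i) (T i)), Finset.mem_univ,
      if_true, hsum]
    rw [← Finset.sum_div]
    rw [if_pos (show yobs i ∈ A by rw [hA]; exact mem_insert_self _ _)]
    exact softmax_aux _ _ _ _ hST.ne' hS.ne' hsplit
  have nonneg : ∀ i, 0 ≤ softmaxOn (s i) β (insert (yobs i) (T i)) (yobs i)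
          * ∑ y ∈ Finset.univ \ insert (yobs i) (T i), softmaxOn (s i) β Finset.univ y := by
    intro i
    have h1 : 0 ≤ softmaxOn (s i) β (insert (yobs i) (T i)) (yobs i) := by
      unfold softmaxOn
      positivity
    have h2 : ∀ y ∈ Finset.univ \ insert (yobs i) (T i),
        0 ≤ softmaxOn (s i) β Finset.univ y := by
      intro y _; unfold softmaxOn; positivity
    exact mul_nonneg h1 (Finset.sum_nonneg h2)
  have heq : ((1 / (m : ℝ)) * ∑ i, (1 - softmaxOn (s i) β (insert (yobs i) (T i)) (yobs i)))
        - (1 / (m : ℝ)) * ∑ i, (1 - softmaxOn (s i) β Finset.univ (yobs i))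
      = -((1 / (m : ℝ)) * ∑ i,
            softmaxOn (s i) β (insert (yobs i) (T i)) (yobs i)
              * ∑ y ∈ Finset.univ \ insert (yobs i) (T i), softmaxOn (s i) β Finset.univ y) := by
    have hterm : ∀ i, (1 - softmaxOn (s i) β (insert (yobs i) (T i)) (yobs i))
        - (1 - softmaxOn (s i) β Finset.univ (yobs i))
        = -(softmaxOn (s i) β (insert (yobs i) (T i)) (yobs i)
            * ∑ y ∈ Finset.univ \ insert (yobs i) (T i), softmaxOn (s i) β Finset.univ y) :=
      fun i => by rw [← key i]; ring
    rw [← mul_sub, ← Finset.sum_sub_distrib,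
      Finset.sum_congr rfl fun i _ => hterm i, Finset.sum_neg_distrib, mul_neg]
  refine ⟨heq, heq ▸ ?_⟩
  have : 0 ≤ (1 / (m : ℝ)) * ∑ i,
      softmaxOn (s i) β (insert (yobs i) (T i)) (yobs i)
        * ∑ y ∈ Finset.univ \ insert (yobs i) (T i), softmaxOn (s i) β Finset.univ y :=
    mul_nonneg (by positivity) (Finset.sum_nonneg fun i _ => nonneg i)
  linarith
end

section
/- (Case I of Lemma 3: softmax concentration at a strict maximizer) Let Y be a finite set with |Y| = r ≥ 2, let s : Y → ℝ, and suppose y₀ ∈ Y satisfies s(y₀) > s(y) for all y ≠ y₀. Let g = s(y₀) − max_{y≠y₀} s(y) > 0, let m > 1 be such that (r−1)(√m − 1) > 1, and suppose the temperature satisfies 0 < β ≤ g / log((r−1)(√m−1)). Then 1 − q_Y(y₀) ≤ 1/√m, where q_Y(y₀) = exp(s(y₀)/β)/∑_{y∈Y} exp(s(y)/β). -/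
open Real Finset

/-- **Case I of Lemma 3: softmax concentration at a strict maximizer.**
If `y₀` strictly maximizes the scores with gap `g`, and the temperature satisfies
`β ≤ g / log((r−1)(√m−1))`, then the softmax distribution puts mass at least
`1 − 1/√m` on `y₀`. -/
theorem softmax_concentration_at_strict_maximizer
    {Y : Type*} [Fintype Y] [DecidableEq Y]
    (r : ℕ) (hr : 2 ≤ r) (hcard : Fintype.card Y = r)
    (s : Y → ℝ) (y₀ : Y)
    (hmax : ∀ y : Y, y ≠ y₀ → s y < s y₀)
    (g : ℝ)
    (hg : g = s y₀ - (Finset.univ.erase y₀).sup' (by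
      rw [← Finset.card_pos, Finset.card_erase_of_mem (Finset.mem_univ _),
        Finset.card_univ, hcard]; omega) s)
    (m : ℝ) (hm : 1 < m)
    (hrm : 1 < ((r : ℝ) - 1) * (Real.sqrt m - 1))
    (β : ℝ) (hβ : 0 < β)
    (hβle : β ≤ g / Real.log (((r : ℝ) - 1) * (Real.sqrt m - 1))) :
    1 - exp (s y₀ / β) / ∑ y : Y, exp (s y / β) ≤ 1 / Real.sqrt m := by
  have hne : (Finset.univ.erase y₀).Nonempty := by
    rw [← Finset.card_pos, Finset.card_erase_of_mem (Finset.mem_univ _),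
      Finset.card_univ, hcard]; omega
  set M := (Finset.univ.erase y₀).sup' hne s with hM
  have hgM : g = s y₀ - M := hg
  -- g > 0
  obtain ⟨ym, hym, hymeq⟩ := Finset.exists_mem_eq_sup' hne s
  have hymne : ym ≠ y₀ := (Finset.mem_erase.mp hym).1
  have hg0 : 0 < g := by
    have := hmax ym hymne
    rw [hgM, ← hM] at *
    rw [hymeq]; linarith
  -- √m > 1
  have hsm : 1 < Real.sqrt m := by
    have : Real.sqrt 1 < Real.sqrt m := Real.sqrt_lt_sqrt (by norm_num) hm
    simpa using this
  set c : ℝ := ((r : ℝ) - 1) * (Real.sqrt m - 1) with hc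
  have hc0 : 0 < c := lt_trans one_pos hrm
  have hlogc : 0 < Real.log c := Real.log_pos hrm
  -- g/β ≥ log c
  have hgb : Real.log c ≤ g / β := by
    rw [le_div_iff₀ hβ]
    have := (le_div_iff₀ hlogc).mp hβle
    linarith
  have hexp : Real.exp (-(g / β)) ≤ 1 / c := by
    have h := Real.exp_le_exp.mpr (by linarith : -(g / β) ≤ -Real.log c)
    rwa [Real.exp_neg (Real.log c), Real.exp_log hc0, ← one_div] at h
  set E : ℝ := Real.exp (s y₀ / β) with hE
  set S : ℝ := ∑ y ∈ Finset.univ.erase y₀, Real.exp (s y / β) with hS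
  have hE0 : 0 < E := Real.exp_pos _
  have hS0 : 0 < S := Finset.sum_pos (fun y _ => Real.exp_pos _) hne
  -- bound each term of S
  have hterm : ∀ y ∈ Finset.univ.erase y₀,
      Real.exp (s y / β) ≤ E * Real.exp (-(g / β)) := by
    intro y hy
    have hle : s y ≤ M := Finset.le_sup' s hy
    have h1 : s y / β ≤ (s y₀ - g) / β := by
      gcongr
      rw [hgM]; linarith
    have h2 : (s y₀ - g) / β = s y₀ / β + (-(g / β)) := by ring
    calc Real.exp (s y / β) ≤ Real.exp ((s y₀ - g) / β) := Real.exp_le_exp.mpr h1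
      _ = Real.exp (s y₀ / β + (-(g / β))) := by rw [h2]
      _ = E * Real.exp (-(g / β)) := by rw [Real.exp_add]
  have hcard' : ((Finset.univ.erase y₀).card : ℝ) = (r : ℝ) - 1 := by
    rw [Finset.card_erase_of_mem (Finset.mem_univ _), Finset.card_univ, hcard]
    push_cast [Nat.cast_sub (by omega : 1 ≤ r)]
    ring
  have hSb : S ≤ ((r : ℝ) - 1) * (E * Real.exp (-(g / β))) := by
    calc S ≤ (Finset.univ.erase y₀).card • (E * Real.exp (-(g / β))) :=
          Finset.sum_le_card_nsmul _ _ _ hterm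
      _ = ((r : ℝ) - 1) * (E * Real.exp (-(g / β))) := by
          rw [nsmul_eq_mul, hcard']
  -- (√m - 1) * S ≤ E
  have hkey : (Real.sqrt m - 1) * S ≤ E := by
    have h1 : (Real.sqrt m - 1) * S
        ≤ (Real.sqrt m - 1) * (((r : ℝ) - 1) * (E * Real.exp (-(g / β)))) := by
      apply mul_le_mul_of_nonneg_left hSb (by linarith)
    have h2 : (Real.sqrt m - 1) * (((r : ℝ) - 1) * (E * Real.exp (-(g / β))))
        = c * E * Real.exp (-(g / β)) := by rw [hc]; ring
    have h3 : c * E * Real.exp (-(g / β)) ≤ c * E * (1 / c) := by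
      apply mul_le_mul_of_nonneg_left hexp (by positivity)
    have h4 : c * E * (1 / c) = E := by field_simp
    linarith
  -- total sum
  have hZ : ∑ y : Y, Real.exp (s y / β) = E + S := by
    exact (Finset.add_sum_erase _ _ (Finset.mem_univ y₀)).symm
  rw [hZ]
  have hZ0 : 0 < E + S := by linarith
  have hq : 1 - E / (E + S) = S / (E + S) := by field_simp; ring
  rw [hq, div_le_div_iff₀ hZ0 (by positivity)]
  nlinarith [hkey, hS0]
end

section
/- (Case II of Lemma 3: expected restricted-softmax probability of a dominated output) Fix an input x with finite output set Y, feature map φ(x,·) : Y → ℝ^d, weight vector w ≠ 0, observed output y₀ ∈ Y, and temperature 0 < β ≤ ‖w‖₁/log m with m > 1. Let T be a random set of n ≥ m^{0.5−c} outputs from Y∖{y₀} (for some c ∈ [0,1]) such that, with probability at least 1 − ‖w‖₁/√m, the average score satisfies (1/n)∑_{y∈T} ⟨φ(x,y), w⟩ ≥ ⟨φ(x,y₀), w⟩ + c‖w‖₁. Then E_T[ q_{T∪{y₀}}(y₀) ] ≤ 1/(1 + √m) + ‖w‖₁/√m, where q_{T∪{y₀}}(y₀) = exp(⟨φ(x,y₀),w⟩/β)/∑_{y∈T∪{y₀}}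 exp(⟨φ(x,y),w⟩/β). -/
open Real MeasureTheory Finset

/-- **Case II of Lemma 3: expected restricted-softmax probability of a dominated
output.** Scores are `⟨φ(x,y), w⟩ = ∑ⱼ φ y j * w j` and `‖w‖₁ = ∑ⱼ |w j|`.
`T` is a random set of `n ≥ m^{0.5−c}` outputs from `Y∖{y₀}` whose average score
exceeds the score of `y₀` by `c‖w‖₁` with probability at least `1 − ‖w‖₁/√m`;
then the expected restricted softmax probability of `y₀` on `T ∪ {y₀}` is at most
`1/(1+√m) + ‖w‖₁/√m`. -/
theorem expected_restricted_softmax_dominated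
    {Y : Type*} [Fintype Y] [DecidableEq Y]
    (d : ℕ) (φ : Y → Fin d → ℝ) (w : Fin d → ℝ) (hw : w ≠ 0)
    (y₀ : Y) (m : ℝ) (hm : 1 < m)
    (β : ℝ) (hβ : 0 < β) (hβle : β ≤ (∑ j, |w j|) / Real.log m)
    (c : ℝ) (hc0 : 0 ≤ c) (hc1 : c ≤ 1)
    (n : ℕ) (hn : (n : ℝ) ≥ m ^ ((0.5 : ℝ) - c))
    {Ω : Type*} [MeasurableSpace Ω] (μ : Measure Ω) [IsProbabilityMeasure μ]
    (T : Ω → Finset Y)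
    (hT : ∀ ω, y₀ ∉ T ω ∧ (T ω).card = n)
    (hmeas : Measurable fun ω =>
      exp ((∑ j, φ y₀ j * w j) / β) /
        ∑ y ∈ insert y₀ (T ω), exp ((∑ j, φ y j * w j) / β))
    (havg : μ {ω | (1 / (n : ℝ)) * ∑ y ∈ T ω, (∑ j, φ y j * w j)
          ≥ (∑ j, φ y₀ j * w j) + c * ∑ j, |w j|}
        ≥ ENNReal.ofReal (1 - (∑ j, |w j|) / Real.sqrt m)) :
    (∫ ω, exp ((∑ j, φ y₀ j * w j) / β) /
        ∑ y ∈ insert y₀ (T ω), exp ((∑ j, φ y j * w j) / β) ∂μ)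
      ≤ 1 / (1 + Real.sqrt m) + (∑ j, |w j|) / Real.sqrt m := by
  classical
  set s : Y → ℝ := fun y => ∑ j, φ y j * w j with hs
  set L : ℝ := ∑ j, |w j| with hL
  set q : Ω → ℝ := fun ω => exp (s y₀ / β) / ∑ y ∈ insert y₀ (T ω), exp (s y / β)
    with hq
  set a : ℝ := 1 / (1 + Real.sqrt m) with ha
  have hm0 : (0 : ℝ) < m := by linarith
  have hlm : (0 : ℝ) < Real.log m := Real.log_pos hm
  have hsm : (0 : ℝ) < Real.sqrt m := Real.sqrt_pos.mpr hm0
  have ha0 : (0 : ℝ) < a := by positivity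
  have ha1 : a ≤ 1 := by
    rw [ha, div_le_one (by linarith)]; linarith
  have hL0 : (0 : ℝ) ≤ L := Finset.sum_nonneg fun j _ => abs_nonneg _
  have hn0 : (0 : ℝ) < (n : ℝ) :=
    lt_of_lt_of_le (Real.rpow_pos_of_pos hm0 _) hn
  -- denominator is positive, and `q` is between 0 and 1
  have hden : ∀ ω, 0 < ∑ y ∈ insert y₀ (T ω), exp (s y / β) := fun ω =>
    Finset.sum_pos (fun y _ => Real.exp_pos _) ⟨y₀, Finset.mem_insert_self _ _⟩
  have hq0 : ∀ ω, 0 ≤ q ω := fun ω => div_nonneg (Real.exp_pos _).le (hden ω).le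
  have hq1 : ∀ ω, q ω ≤ 1 := by
    intro ω
    rw [hq, div_le_one (hden ω)]
    exact Finset.single_le_sum (f := fun y => exp (s y / β))
      (fun y _ => (Real.exp_pos _).le) (Finset.mem_insert_self _ _)
  -- the key pointwise bound on the "good" event
  have hkey : ∀ ω, ((1 / (n : ℝ)) * ∑ y ∈ T ω, s y ≥ s y₀ + c * L) → q ω ≤ a := by
    intro ω hωavg
    obtain ⟨hy₀, hcard⟩ := hT ω
    -- Jensen for exp
    have hjen : exp (((1 / (n : ℝ)) * ∑ y ∈ T ω, s y) / β)
        ≤ (1 / (n : ℝ)) * ∑ y ∈ T ω, exp (s y / β) := by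
      have := convexOn_exp.map_sum_le (t := T ω) (w := fun _ => 1 / (n : ℝ))
        (p := fun y => s y / β) (fun _ _ => by positivity)
        (by rw [Finset.sum_const, hcard, nsmul_eq_mul]; field_simp)
        (fun _ _ => Set.mem_univ _)
      simpa [Finset.mul_sum, Finset.sum_div, mul_div_assoc] using this
    have hsum : (n : ℝ) * exp ((s y₀ + c * L) / β) ≤ ∑ y ∈ T ω, exp (s y / β) := by
      have h1 : exp ((s y₀ + c * L) / β)
          ≤ exp (((1 / (n : ℝ)) * ∑ y ∈ T ω, s y) / β) :=
        Real.exp_le_exp.mpr (by gcongr)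
      calc (n : ℝ) * exp ((s y₀ + c * L) / β)
          ≤ (n : ℝ) * exp (((1 / (n : ℝ)) * ∑ y ∈ T ω, s y) / β) :=
            mul_le_mul_of_nonneg_left h1 hn0.le
        _ ≤ (n : ℝ) * ((1 / (n : ℝ)) * ∑ y ∈ T ω, exp (s y / β)) :=
            mul_le_mul_of_nonneg_left hjen hn0.le
        _ = ∑ y ∈ T ω, exp (s y / β) := by field_simp
    -- exp(cL/β) ≥ m^c
    have hexp : m ^ c ≤ exp (c * L / β) := by
      rw [Real.rpow_def_of_pos hm0, Real.exp_le_exp]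
      have hβL : β * Real.log m ≤ L := (le_div_iff₀ hlm).mp hβle
      rw [le_div_iff₀ hβ]
      nlinarith [mul_le_mul_of_nonneg_left hβL hc0]
    -- n * m^c ≥ √m
    have hnm : Real.sqrt m ≤ (n : ℝ) * m ^ c := by
      have h := mul_le_mul_of_nonneg_right hn (Real.rpow_nonneg hm0.le c)
      calc Real.sqrt m = m ^ ((0.5 : ℝ) - c) * m ^ c := by
            rw [← Real.rpow_add hm0, sub_add_cancel, Real.sqrt_eq_rpow]
            norm_num
        _ ≤ (n : ℝ) * m ^ c := h
    -- denominator ≥ exp(s y₀/β) * (1 + √m)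
    have hbig : exp (s y₀ / β) * (1 + Real.sqrt m)
        ≤ ∑ y ∈ insert y₀ (T ω), exp (s y / β) := by
      rw [Finset.sum_insert hy₀]
      have h3 : Real.sqrt m * exp (s y₀ / β) ≤ ∑ y ∈ T ω, exp (s y / β) := by
        calc Real.sqrt m * exp (s y₀ / β)
            ≤ ((n : ℝ) * m ^ c) * exp (s y₀ / β) :=
              mul_le_mul_of_nonneg_right hnm (Real.exp_pos _).le
          _ ≤ (n : ℝ) * exp ((s y₀ + c * L) / β) := by
              rw [add_div, Real.exp_add, mul_assoc]
              apply mul_le_mul_of_nonneg_left _ hn0.le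
              calc m ^ c * exp (s y₀ / β) ≤ exp (c * L / β) * exp (s y₀ / β) :=
                    mul_le_mul_of_nonneg_right hexp (Real.exp_pos _).le
                _ = exp (s y₀ / β) * exp (c * L / β) := mul_comm _ _
          _ ≤ ∑ y ∈ T ω, exp (s y / β) := hsum
      nlinarith [Real.exp_pos (s y₀ / β)]
    rw [hq, ha]
    calc exp (s y₀ / β) / ∑ y ∈ insert y₀ (T ω), exp (s y / β)
        ≤ exp (s y₀ / β) / (exp (s y₀ / β) * (1 + Real.sqrt m)) :=
          div_le_div_of_nonneg_left (Real.exp_pos _).le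
            (by positivity) hbig
      _ = 1 / (1 + Real.sqrt m) := by
          rw [div_mul_eq_div_div, div_self (Real.exp_pos _).ne']
  -- the measurable superset of the good event
  have hqmeas : Measurable q := hmeas
  set S : Set Ω := {ω | q ω ≤ a} with hS
  have hSmeas : MeasurableSet S := measurableSet_le hqmeas measurable_const
  have hsub : {ω | (1 / (n : ℝ)) * ∑ y ∈ T ω, s y ≥ s y₀ + c * L} ⊆ S :=
    fun ω hω => hkey ω hω
  -- bound μ Sᶜ
  have hcompl : (μ Sᶜ).toReal ≤ L / Real.sqrt m := by
    by_cases ht1 : L / Real.sqrt m < 1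
    · have hμS : ENNReal.ofReal (1 - L / Real.sqrt m) ≤ μ S :=
        le_trans havg (measure_mono hsub)
      have hkey2 : μ Sᶜ ≤ ENNReal.ofReal (L / Real.sqrt m) := by
        rw [prob_compl_eq_one_sub hSmeas]
        have he : (1 : ENNReal) - ENNReal.ofReal (1 - L / Real.sqrt m)
            = ENNReal.ofReal (L / Real.sqrt m) := by
          rw [← ENNReal.ofReal_one,
            ← ENNReal.ofReal_sub _ (by linarith : (0:ℝ) ≤ 1 - L / Real.sqrt m)]
          congr 1
          ring
        calc 1 - μ S ≤ 1 - ENNReal.ofReal (1 - L / Real.sqrt m) :=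
              tsub_le_tsub_left hμS 1
          _ = ENNReal.ofReal (L / Real.sqrt m) := he
      exact ENNReal.toReal_le_of_le_ofReal (div_nonneg hL0 hsm.le) hkey2
    · push_neg at ht1
      have h1 : (μ Sᶜ).toReal ≤ 1 := by
        have := ENNReal.toReal_mono ENNReal.one_ne_top (prob_le_one (μ := μ) (s := Sᶜ))
        simpa using this
      linarith
  -- integrability
  have hqint : Integrable q μ := by
    apply Integrable.mono' (integrable_const (1 : ℝ)) hqmeas.aestronglyMeasurable
    filter_upwards with ω
    rw [Real.norm_eq_abs, abs_of_nonneg (hq0 ω)]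
    exact hq1 ω
  -- the dominating simple function
  set g : Ω → ℝ := fun ω => a + Sᶜ.indicator (fun _ => 1 - a) ω with hg
  have hgint : Integrable g μ :=
    (integrable_const a).add ((integrable_const (1 - a)).indicator hSmeas.compl)
  have hle : ∀ ω, q ω ≤ g ω := by
    intro ω
    simp only [hg]
    by_cases hωS : ω ∈ S
    · rw [Set.indicator_of_notMem (Set.notMem_compl_iff.mpr hωS)]
      simpa [hS] using hωS
    · rw [Set.indicator_of_mem (Set.mem_compl hωS)]
      have := hq1 ω
      simp only [add_sub_cancel]
      linarith
  have hint : ∫ ω, q ω ∂μ ≤ ∫ ω, g ω ∂μ := integral_mono hqint hgint hle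
  have hgval : ∫ ω, g ω ∂μ = a + (μ Sᶜ).toReal * (1 - a) := by
    rw [hg, integral_add (integrable_const a)
      ((integrable_const (1 - a)).indicator hSmeas.compl),
      integral_const, integral_indicator_const _ hSmeas.compl]
    simp [measure_univ, smul_eq_mul]
    exact Or.inl rfl
  have hμc0 : (0 : ℝ) ≤ (μ Sᶜ).toReal := ENNReal.toReal_nonneg
  calc (∫ ω, q ω ∂μ) ≤ a + (μ Sᶜ).toReal * (1 - a) := by rw [← hgval]; exact hint
    _ ≤ a + L / Real.sqrt m := by nlinarith
end
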